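/- For any connected pointed CW complexes X and Y, the topological complexity of the wedge satisfies the lower bound TC(X∨Y) ≥ max{TC(X), TC(Y), cat(X×Y)}. -/

import Mathlib

open Metric Set unitInterval

/-- A CW structure on the subset `C` of the ambient topological space `X`, given by
characteristic maps of cells, which are defined on closed balls in `Fin n → ℝ`,
are homeomorphisms from the open ball onto the corresponding open cell, satisfy
closure-finiteness, and induce the weak topology on `C`. -/
structure CWStruct {X : Type} [TopologicalSpace X] (C : Set X) : Type 1 where
  /-- the index type of the `n`-cells -/
  cell : ℕ → Type
  /-- the characteristic map of each `n`-cell -/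
  map : (n : ℕ) → cell n → PartialEquiv (Fin n → ℝ) X
  source_eq : ∀ n i, (map n i).source = ball 0 1
  continuousOn : ∀ n i, ContinuousOn (map n i) (closedBall 0 1)
  continuousOn_symm : ∀ n i, ContinuousOn (map n i).symm (map n i).target
  pairwiseDisjoint :
    (Set.univ : Set (Σ n, cell n)).PairwiseDisjoint (fun ni => map ni.1 ni.2 '' ball 0 1)
  mapsTo : ∀ n i, ∃ Js : Π m, Finset (cell m),
    Set.MapsTo (map n i) (sphere 0 1)
      (⋃ m, ⋃ (_ : m < n), ⋃ j ∈ Js m, map m j '' closedBall 0 1)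
  closed' : ∀ A : Set X, A ⊆ C →
    (∀ n j, IsClosed (A ∩ map n j '' closedBall 0 1)) → IsClosed A
  union' : ⋃ n, ⋃ j, map n j '' closedBall 0 1 = C

/-- The dimension of a CW structure: the supremum of the dimensions of its cells. -/
noncomputable def CWStruct.dim {X : Type} [TopologicalSpace X] {C : Set X}
    (K : CWStruct C) : ℕ∞ :=
  sSup {N : ℕ∞ | ∃ n : ℕ, N = n ∧ Nonempty (K.cell n)}

/-- `K'` is a subcomplex of `K` if every cell of `K'` is a cell of `K`
(with the same characteristic map). -/
def CWStruct.IsSubcomplexOf {X : Type} [TopologicalSpace X] {C C' : Set X}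
    (K' : CWStruct C') (K : CWStruct C) : Prop :=
  C' ⊆ C ∧ ∀ n, ∃ f : K'.cell n → K.cell n,
    Function.Injective f ∧ ∀ i, K.map n (f i) = K'.map n i

/-- The reduced topological complexity of a space `X`, valued in `ℕ∞`: the least `n` such
that `X × X` admits a cover by `n + 1` open sets, each admitting a continuous motion
planning algorithm. -/
noncomputable def tc (X : Type*) [TopologicalSpace X] : ℕ∞ :=
  sInf {N : ℕ∞ | ∃ n : ℕ, N = n ∧ ∃ U : Fin (n + 1) → Set (X × X),
    (∀ i, IsOpen (U i)) ∧ (∀ p : X × X, ∃ i, p ∈ U i) ∧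
    ∀ i, ∃ s : C(U i, C(I, X)), ∀ p : U i,
      s p 0 = (p : X × X).1 ∧ s p 1 = (p : X × X).2}

/-- The reduced Lusternik–Schnirelmann category of a space `X`, valued in `ℕ∞`: the least `n`
such that `X` admits a cover by `n + 1` open sets whose inclusions into `X` are
null-homotopic. -/
noncomputable def lscat (X : Type*) [TopologicalSpace X] : ℕ∞ :=
  sInf {N : ℕ∞ | ∃ n : ℕ, N = n ∧ ∃ U : Fin (n + 1) → Set X,
    (∀ i, IsOpen (U i)) ∧ (∀ x : X, ∃ i, x ∈ U i) ∧
    ∀ i, ∃ x₀ : X, ContinuousMap.Homotopic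
      (⟨fun p : U i => (p : X), continuous_subtype_val⟩ : C(U i, X))
      (ContinuousMap.const (U i) x₀)}

/-- The cohomological dimension of a group `G`: the supremum of all `n` such that
the group cohomology `Hⁿ(G; M)` is nonzero for some `ℤG`-module `M`. -/
noncomputable def cd (G : Type) [Group G] : ℕ∞ :=
  sSup {N : ℕ∞ | ∃ n : ℕ, N = n ∧ ∃ M : Rep ℤ G, Nontrivial (groupCohomology M n)}

/-- `X` (with base point `x`) is a classifying space (an aspherical Eilenberg–MacLane space
`K(G,1)`) for the group `G`. -/
structure IsClassifyingSpace (G : Type) [Group G] (X : Type) [TopologicalSpace X]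
    (x : X) : Prop where
  pathConnected : PathConnectedSpace X
  aspherical : ∀ n : ℕ, 2 ≤ n → Subsingleton (HomotopyGroup (Fin n) X x)
  pi1 : Nonempty (FundamentalGroup X x ≃* G)

/-- The wedge (one-point union) of two pointed spaces `(X, x₀)` and `(Y, y₀)`: the quotient
of the disjoint union of `X` and `Y` identifying the two base points. -/
def Wedge {X Y : Type} [TopologicalSpace X] [TopologicalSpace Y] (x₀ : X) (y₀ : Y) : Type :=
  Quot (fun a b : X ⊕ Y => a = Sum.inl x₀ ∧ b = Sum.inr y₀)

instance {X Y : Type} [TopologicalSpace X] [TopologicalSpace Y] (x₀ : X) (y₀ : Y) :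
    TopologicalSpace (Wedge x₀ y₀) :=
  inferInstanceAs (TopologicalSpace (Quot _))


section WedgeAux

variable {X Y : Type} [TopologicalSpace X] [TopologicalSpace Y] (x₀ : X) (y₀ : Y)

/-- Inclusion of `X` into the wedge. -/
def wedgeInl : X → Wedge x₀ y₀ := fun x => Quot.mk _ (Sum.inl x)

/-- Inclusion of `Y` into the wedge. -/
def wedgeInr : Y → Wedge x₀ y₀ := fun y => Quot.mk _ (Sum.inr y)

/-- Retraction of the wedge onto `X`. -/
def wedgeRetrL : Wedge x₀ y₀ → X :=
  Quot.lift (Sum.elim id fun _ => x₀) (by rintro a b ⟨rfl, rfl⟩; rfl)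

/-- Retraction of the wedge onto `Y`. -/
def wedgeRetrR : Wedge x₀ y₀ → Y :=
  Quot.lift (Sum.elim (fun _ => y₀) id) (by rintro a b ⟨rfl, rfl⟩; rfl)

lemma continuous_wedgeInl : Continuous (wedgeInl x₀ y₀) :=
  continuous_quot_mk.comp continuous_inl

lemma continuous_wedgeInr : Continuous (wedgeInr x₀ y₀) :=
  continuous_quot_mk.comp continuous_inr

lemma continuous_wedgeRetrL : Continuous (wedgeRetrL x₀ y₀) :=
  continuous_quot_lift _ (continuous_id.sumElim continuous_const)

lemma continuous_wedgeRetrR : Continuous (wedgeRetrR x₀ y₀) :=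
  continuous_quot_lift _ (continuous_const.sumElim continuous_id)

@[simp] lemma wedgeRetrL_inl (x : X) : wedgeRetrL x₀ y₀ (wedgeInl x₀ y₀ x) = x := rfl
@[simp] lemma wedgeRetrL_inr (y : Y) : wedgeRetrL x₀ y₀ (wedgeInr x₀ y₀ y) = x₀ := rfl
@[simp] lemma wedgeRetrR_inl (x : X) : wedgeRetrR x₀ y₀ (wedgeInl x₀ y₀ x) = y₀ := rfl
@[simp] lemma wedgeRetrR_inr (y : Y) : wedgeRetrR x₀ y₀ (wedgeInr x₀ y₀ y) = y := rfl

/-- `tc` of a retract is at most `tc` of the ambient space. -/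
lemma tc_le_of_retract {Z : Type*} [TopologicalSpace Z] {A : Type*} [TopologicalSpace A]
    (ι : A → Z) (r : Z → A) (hι : Continuous ι) (hr : Continuous r)
    (hri : ∀ a, r (ι a) = a) : tc A ≤ tc Z := by
  apply le_sInf
  rintro N ⟨n, rfl, U, hUo, hUc, hUs⟩
  apply sInf_le
  refine ⟨n, rfl, fun i => (fun p : A × A => ((ι p.1, ι p.2) : Z × Z)) ⁻¹' U i, ?_, ?_, ?_⟩
  · exact fun i => (hUo i).preimage ((hι.comp continuous_fst).prodMk (hι.comp continuous_snd))
  · exact fun p => hUc (ι p.1, ι p.2)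
  · intro i
    obtain ⟨s, hs⟩ := hUs i
    refine ⟨⟨fun p => (⟨r, hr⟩ : C(Z, A)).comp
      (s ⟨(ι (p : A × A).1, ι (p : A × A).2), p.2⟩), ?_⟩, ?_⟩
    · exact (ContinuousMap.continuous_postcomp _).comp <| s.continuous.comp <|
        Continuous.subtype_mk (((hι.comp continuous_fst).prodMk
          (hι.comp continuous_snd)).comp continuous_subtype_val) _
    · intro p
      obtain ⟨h0, h1⟩ := hs ⟨(ι (p : A × A).1, ι (p : A × A).2), p.2⟩
      constructor
      · show r (s _ 0) = _; rw [h0]; exact hri _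
      · show r (s _ 1) = _; rw [h1]; exact hri _

end WedgeAux

/-- The lower bound for the topological complexity of a wedge:
`TC (X ∨ Y) ≥ max {TC X, TC Y, cat (X × Y)}` for connected CW complexes `X` and `Y`. -/
theorem le_tc_wedge (X Y : Type) [TopologicalSpace X] [TopologicalSpace Y]
    [ConnectedSpace X] [ConnectedSpace Y]
    (KX : CWStruct (Set.univ : Set X)) (KY : CWStruct (Set.univ : Set Y))
    (x₀ : X) (y₀ : Y) :
    max (max (tc X) (tc Y)) (lscat (X × Y)) ≤ tc (Wedge x₀ y₀) := by
  set W := Wedge x₀ y₀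
  have hιX := continuous_wedgeInl x₀ y₀
  have hιY := continuous_wedgeInr x₀ y₀
  have hrX := continuous_wedgeRetrL x₀ y₀
  have hrY := continuous_wedgeRetrR x₀ y₀
  refine max_le (max_le ?_ ?_) ?_
  · exact tc_le_of_retract (wedgeInl x₀ y₀) (wedgeRetrL x₀ y₀) hιX hrX fun a => rfl
  · exact tc_le_of_retract (wedgeInr x₀ y₀) (wedgeRetrR x₀ y₀) hιY hrY fun a => rfl
  · -- lscat (X × Y) ≤ tc W
    apply le_sInf
    rintro N ⟨n, rfl, U, hUo, hUc, hUs⟩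
    apply sInf_le
    set e : X × Y → W × W := fun p => (wedgeInl x₀ y₀ p.1, wedgeInr x₀ y₀ p.2) with he
    have hec : Continuous e :=
      (hιX.comp continuous_fst).prodMk (hιY.comp continuous_snd)
    refine ⟨n, rfl, fun i => e ⁻¹' U i, fun i => (hUo i).preimage hec,
      fun p => hUc (e p), ?_⟩
    intro i
    obtain ⟨s, hs⟩ := hUs i
    refine ⟨(x₀, y₀), ⟨?_⟩⟩
    -- the homotopy
    have hq : Continuous fun p : (e ⁻¹' U i) => (⟨e (p : X × Y), p.2⟩ : U i) :=
      Continuous.subtype_mk (hec.comp continuous_subtype_val) _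
    have key : Continuous fun z : I × (e ⁻¹' U i) =>
        ((wedgeRetrL x₀ y₀ (s ⟨e (z.2 : X × Y), z.2.2⟩ z.1),
          wedgeRetrR x₀ y₀ (s ⟨e (z.2 : X × Y), z.2.2⟩ (unitInterval.symm z.1))) : X × Y) := by
      have hev : Continuous fun z : I × (e ⁻¹' U i) => s ⟨e (z.2 : X × Y), z.2.2⟩ z.1 :=
        continuous_eval.comp
          ((s.continuous.comp (hq.comp continuous_snd)).prodMk continuous_fst)
      have hev' : Continuous fun z : I × (e ⁻¹' U i) =>
          s ⟨e (z.2 : X × Y), z.2.2⟩ (unitInterval.symm z.1) :=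
        continuous_eval.comp
          ((s.continuous.comp (hq.comp continuous_snd)).prodMk
            (continuous_symm.comp continuous_fst))
      exact (hrX.comp hev).prodMk (hrY.comp hev')
    refine ⟨⟨_, key⟩, ?_, ?_⟩
    · intro p
      obtain ⟨h0, h1⟩ := hs ⟨e (p : X × Y), p.2⟩
      simp only [ContinuousMap.coe_mk, unitInterval.symm_zero]
      rw [h0, h1]
      rfl
    · intro p
      obtain ⟨h0, h1⟩ := hs ⟨e (p : X × Y), p.2⟩
      simp only [ContinuousMap.coe_mk, unitInterval.symm_one]
      rw [h0, h1]
      rfl
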